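/- For every strictly increasing f : ℕ → ℕ there exists g ∈ H such that I_g ⊆ 𝒴_f, i.e., every set A ⊆ 2^ω with A ∈ I_g belongs to the Yorioka ideal 𝒴_f. -/

import Mathlib

/-- `level A n` is the number of distinct restrictions to `n` of elements of `A ⊆ 2^ω`. -/
noncomputable def level (A : Set (ℕ → Bool)) (n : ℕ) : ℕ :=
  ((fun x : ℕ → Bool => (fun i : Fin n => x i)) '' A).ncard

/-- The class `H` of non-decreasing, unbounded `f : ℕ → ℕ` with `f n ≤ n`. -/
def memH (f : ℕ → ℕ) : Prop :=
  Monotone f ∧ (∀ m : ℕ, ∃ n, m ≤ f n) ∧ ∀ n, f n ≤ n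

/-- The ideal `I_f` on `2^ω`. -/
def idealI (f : ℕ → ℕ) : Set (Set (ℕ → Bool)) :=
  {A | ∀ d : ℕ, 1 ≤ d → ∀ᶠ n in Filter.atTop, d * level A n ≤ f n}

/-- The basic clopen set `[s]` of branches through the finite binary sequence `s`. -/
def cylinder (s : List Bool) : Set (ℕ → Bool) :=
  {x | ∀ i : Fin s.length, x i = s.get i}

/-- `[σ]_∞ := ⋂_n ⋃_{m ≥ n} [σ(m)]`. -/
def limsupCyl (σ : ℕ → List Bool) : Set (ℕ → Bool) :=
  ⋂ n, ⋃ m ≥ n, cylinder (σ m)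

/-- `f ≪ g` iff for every `k`, `f (i ^ k) ≤ g i` for all but finitely many `i`. -/
def ll (f g : ℕ → ℕ) : Prop :=
  ∀ k : ℕ, ∀ᶠ i in Filter.atTop, f (i ^ k) ≤ g i

/-- The Yorioka ideal `𝒴_f`. -/
def Yorioka (f : ℕ → ℕ) : Set (Set (ℕ → Bool)) :=
  {X | ∃ σ : ℕ → List Bool, X ⊆ limsupCyl σ ∧ ll f (fun i => (σ i).length)}

theorem stmt_8 (f : ℕ → ℕ) (hf : StrictMono f) :
    ∃ g : ℕ → ℕ, memH g ∧ idealI g ⊆ Yorioka f := by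
  -- the level sequence
  set n : ℕ → ℕ := fun j => f ((j+2)^(j+2)) + j + 1 with hn
  have hnj : ∀ j, j + 1 ≤ n j := by
    intro j; simp only [hn]; omega
  have hnsm : StrictMono n := by
    apply strictMono_nat_of_lt_succ
    intro j
    have h1 : (j+2)^(j+2) ≤ (j+1+2)^(j+1+2) :=
      le_trans (Nat.pow_le_pow_left (by omega) _)
        (Nat.pow_le_pow_right (by omega) (by omega))
    have h2 := hf.monotone h1
    simp only [hn]; omega
  -- the slow function g
  set g : ℕ → ℕ := fun m => ((Finset.range (m+1)).filter (fun j => n j ≤ m)).card with hg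
  have hgn : ∀ j, g (n j) ≤ j + 1 := by
    intro j
    have : ((Finset.range (n j + 1)).filter (fun j' => n j' ≤ n j)) ⊆ Finset.range (j+1) := by
      intro j' hj'
      simp only [Finset.mem_filter, Finset.mem_range] at hj' ⊢
      have := hnsm.le_iff_le.mp hj'.2
      omega
    simpa [hg] using Finset.card_le_card this
  refine ⟨g, ⟨?_, ?_, ?_⟩, ?_⟩
  · -- Monotone
    intro m m' hmm
    apply Finset.card_le_card
    intro j hj
    simp only [Finset.mem_filter, Finset.mem_range] at hj ⊢
    omega
  · -- unbounded
    intro M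
    refine ⟨n M, ?_⟩
    have hsub : Finset.range (M+1) ⊆
        (Finset.range (n M + 1)).filter (fun j => n j ≤ n M) := by
      intro j hj
      simp only [Finset.mem_range] at hj
      have h1 : n j ≤ n M := hnsm.monotone (by omega)
      simp only [Finset.mem_filter, Finset.mem_range]
      exact ⟨by have := hnj j; omega, h1⟩
    have := Finset.card_le_card hsub
    simp only [Finset.card_range] at this
    simp only [hg]; omega
  · -- g m ≤ m
    intro m
    have : ((Finset.range (m+1)).filter (fun j => n j ≤ m)) ⊆ Finset.range m := by
      intro j hj
      simp only [Finset.mem_filter, Finset.mem_range] at hj ⊢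
      have := hnj j
      omega
    simpa [hg] using Finset.card_le_card this
  · -- I_g ⊆ Y_f
    intro A hA
    obtain ⟨N0, hN0⟩ := Filter.eventually_atTop.mp (hA 1 le_rfl)
    -- the lists of restrictions
    have hSfin : ∀ j, ((fun x : ℕ → Bool => (fun i : Fin (n j) => x i)) '' A).Finite :=
      fun j => Set.toFinite _
    set l : (j : ℕ) → List (Fin (n j) → Bool) := fun j => (hSfin j).toFinset.toList with hl
    have hllen : ∀ j, (l j).length = level A (n j) := by
      intro j
      simp only [hl, Finset.length_toList]
      exact (Set.ncard_eq_toFinset_card _ (hSfin j)).symm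
    set σ : ℕ → List Bool :=
      fun i => List.ofFn ((l (Nat.sqrt i)).getD (i - (Nat.sqrt i)^2) (fun _ => false)) with hσ
    have hσlen : ∀ i, (σ i).length = n (Nat.sqrt i) := by
      intro i; simp [hσ]; rfl
    refine ⟨σ, ?_, ?_⟩
    · -- coverage
      intro x hx
      simp only [limsupCyl, Set.mem_iInter, Set.mem_iUnion]
      intro N
      set j := max N N0 with hj
      have hnN0 : N0 ≤ n j := by have := hnj j; omega
      have hlev : level A (n j) ≤ j + 1 :=
        le_trans (by simpa using hN0 (n j) hnN0) (hgn j)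
      -- the restriction of x belongs to the list
      have hmem : (fun i : Fin (n j) => x i) ∈ l j := by
        simp only [hl, Finset.mem_toList, Set.Finite.mem_toFinset]
        exact ⟨x, hx, rfl⟩
      obtain ⟨⟨r, hr⟩, hget⟩ := List.mem_iff_get.mp hmem
      have hrlev : r < j + 1 := by rw [hllen j] at hr; omega
      refine ⟨j^2 + r, ?_, ?_⟩
      · have : N ≤ j := le_max_left _ _
        nlinarith [sq_nonneg j]
      · -- x ∈ cylinder (σ (j^2 + r))
        have hsq : Nat.sqrt (j^2 + r) = j := by
          have h1 : j ≤ Nat.sqrt (j^2 + r) := by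
            have := Nat.sqrt_le_sqrt (le_add_right (le_refl (j^2)) : j^2 ≤ j^2 + r)
            simpa [Nat.sqrt_eq'] using this
          have h2 : Nat.sqrt (j^2 + r) < j + 1 := Nat.sqrt_lt'.mpr (by nlinarith)
          omega
        have hσm : σ (j^2 + r) = List.ofFn (fun i : Fin (n j) => x i) := by
          show List.ofFn _ = _
          rw [hsq, (by omega : j^2 + r - j^2 = r), List.getD_eq_getElem _ _ hr]
          exact congrArg List.ofFn hget
        rw [hσm]
        intro idx
        rw [List.get_ofFn]
        simp
    · -- ll
      intro k
      rw [Filter.eventually_atTop]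
      refine ⟨(2*k+2)^2, fun i hi => ?_⟩
      have hjk : 2*k+2 ≤ Nat.sqrt i := by
        have := Nat.sqrt_le_sqrt hi
        simpa [Nat.sqrt_eq'] using this
      have hile : i ≤ (Nat.sqrt i + 1)^2 := by
        have := Nat.lt_succ_sqrt i
        simp only [Nat.succ_eq_add_one] at this
        nlinarith
      have hpow : i ^ k ≤ (Nat.sqrt i + 2)^(Nat.sqrt i + 2) := by
        calc i ^ k ≤ ((Nat.sqrt i + 1)^2)^k := Nat.pow_le_pow_left hile k
        _ = (Nat.sqrt i + 1)^(2*k) := by rw [← pow_mul]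
        _ ≤ (Nat.sqrt i + 2)^(2*k) := Nat.pow_le_pow_left (by omega) _
        _ ≤ (Nat.sqrt i + 2)^(Nat.sqrt i + 2) := Nat.pow_le_pow_right (by omega) (by omega)
      have hmono := hf.monotone hpow
      show f (i ^ k) ≤ (σ i).length
      rw [hσlen i]
      simp only [hn]
      omega
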